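/- Let X be a Hausdorff topological space and Ψ : X → ℝⁿ a continuous map with the path lifting property: for every continuous path γ̄ : [0,1] → ℝⁿ whose image lies in Ψ(X) and every point x ∈ Ψ⁻¹(γ̄(0)) there exists a continuous path γ : [0,1] → X with γ(0) = x and Ψ∘γ = γ̄. If the image Ψ(X) is convex and every level set Ψ⁻¹(w), w ∈ Ψ(X), is path connected, then Ψ : X → ℝⁿ is a convex map. -/

import Mathlib

open Set Metric

/-- A path `c : ℝ → ℝⁿ`, considered on `[0,1]`, is *monotone straight* if either it is
constant, or its image is the segment `[c 0, c 1]` and it parametrizes this segment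
weakly monotonically. -/
def MonotoneStraight {n : ℕ} (c : ℝ → EuclideanSpace ℝ (Fin n)) : Prop :=
  (∀ t ∈ Set.Icc (0:ℝ) 1, c t = c 0) ∨
  ((c '' Set.Icc (0:ℝ) 1 = segment ℝ (c 0) (c 1)) ∧
   ∀ t₁ t₂ t₃ : ℝ, 0 ≤ t₁ → t₁ < t₂ → t₂ < t₃ → t₃ ≤ 1 →
     c t₂ ∈ segment ℝ (c t₁) (c t₃))

/-- The restriction of `Ψ` to `U` is a *convex map*: any two points of `U` are joined by a
continuous path in `U` whose composition with `Ψ` is monotone straight. -/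
def IsConvexMapOn {n : ℕ} {X : Type*} [TopologicalSpace X]
    (Ψ : X → EuclideanSpace ℝ (Fin n)) (U : Set X) : Prop :=
  ∀ x₀ ∈ U, ∀ x₁ ∈ U, ∃ γ : ℝ → X,
    ContinuousOn γ (Set.Icc 0 1) ∧ (∀ t ∈ Set.Icc (0:ℝ) 1, γ t ∈ U) ∧
    γ 0 = x₀ ∧ γ 1 = x₁ ∧ MonotoneStraight (Ψ ∘ γ)

/-- The restriction `Ψ|_U : U → Ψ(U)` is an open map onto its image: the image of every
relatively open subset of `U` is relatively open in `Ψ(U)`. -/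
def IsOpenOnto {n : ℕ} {X : Type*} [TopologicalSpace X]
    (Ψ : X → EuclideanSpace ℝ (Fin n)) (U : Set X) : Prop :=
  ∀ O : Set X, IsOpen O → ∃ V : Set (EuclideanSpace ℝ (Fin n)),
    IsOpen V ∧ Ψ '' (O ∩ U) = V ∩ Ψ '' U

/-- The `Ψ`-distance: the infimum of the lengths (total variations) of `Ψ ∘ γ` over all
continuous paths `γ` in `X` from `x₀` to `x₁`; takes values in `[0,∞]`. -/
noncomputable def psiDist {n : ℕ} {X : Type*} [TopologicalSpace X]
    (Ψ : X → EuclideanSpace ℝ (Fin n)) (x₀ x₁ : X) : ENNReal :=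
  ⨅ γ ∈ {γ : ℝ → X | ContinuousOn γ (Set.Icc 0 1) ∧ γ 0 = x₀ ∧ γ 1 = x₁},
    eVariationOn (Ψ ∘ γ) (Set.Icc 0 1)

/-- If a continuous map has the path lifting property, a convex image, and path connected
level sets, then it is a convex map. -/
theorem isConvexMap_of_pathLifting {n : ℕ} {X : Type*} [TopologicalSpace X] [T2Space X]
    (Ψ : X → EuclideanSpace ℝ (Fin n)) (hcont : Continuous Ψ)
    (hlift : ∀ c : ℝ → EuclideanSpace ℝ (Fin n), ContinuousOn c (Set.Icc 0 1) →
      (∀ t ∈ Set.Icc (0:ℝ) 1, c t ∈ Set.range Ψ) →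
      ∀ x : X, Ψ x = c 0 →
        ∃ γ : ℝ → X, ContinuousOn γ (Set.Icc 0 1) ∧ γ 0 = x ∧
          ∀ t ∈ Set.Icc (0:ℝ) 1, Ψ (γ t) = c t)
    (himg : Convex ℝ (Set.range Ψ))
    (hfib : ∀ w ∈ Set.range Ψ, IsPathConnected (Ψ ⁻¹' {w})) :
    IsConvexMapOn Ψ Set.univ := by
  intro x₀ _ x₁ _
  set A := Ψ x₀ with hA
  set B := Ψ x₁ with hB
  set c : ℝ → EuclideanSpace ℝ (Fin n) := fun s => AffineMap.lineMap A B s with hc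
  have hccont : Continuous c := AffineMap.lineMap_continuous
  have hcrange : ∀ t ∈ Set.Icc (0:ℝ) 1, c t ∈ Set.range Ψ := by
    intro t ht
    have : c t ∈ segment ℝ A B := by
      rw [segment_eq_image_lineMap]
      exact ⟨t, ht, rfl⟩
    exact himg.segment_subset ⟨x₀, rfl⟩ ⟨x₁, rfl⟩ this
  obtain ⟨g, hgcont, hg0, hg⟩ := hlift c hccont.continuousOn hcrange x₀ (by simp [hc, hA])
  have hg1 : Ψ (g 1) = B := by
    have := hg 1 (by norm_num)
    simpa [hc] using this
  set p1 : Path x₀ (g 1) :=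
    ⟨⟨fun s => g s, hgcont.restrict⟩, by simpa using hg0, rfl⟩ with hp1
  have hmemB : g 1 ∈ Ψ ⁻¹' {B} := hg1
  obtain ⟨p2, hp2⟩ := (hfib B ⟨x₁, rfl⟩).joinedIn (g 1) hmemB x₁ rfl
  set p := p1.trans p2 with hp
  refine ⟨p.extend, p.continuous_extend.continuousOn, fun t _ => trivial,
    p.extend_zero, p.extend_one, ?_⟩
  have key : ∀ t ∈ Set.Icc (0:ℝ) 1, Ψ (p.extend t) = c (min (2*t) 1) := by
    intro t ht
    rw [p.extend_apply ht, hp, Path.trans_apply]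
    split_ifs with h
    · have h2t : (2*t) ∈ Set.Icc (0:ℝ) 1 := ⟨by linarith [ht.1], by linarith⟩
      have : min (2*t) 1 = 2*t := min_eq_left (by linarith)
      rw [this]
      exact hg (2*t) h2t
    · have : min (2*t) 1 = 1 := min_eq_right (by linarith [not_le.mp h])
      rw [this]
      have := hp2 ⟨2*t-1, by constructor <;> [linarith [not_le.mp h]; linarith [ht.2]]⟩
      simpa [hc] using this
  right
  have h0 : (Ψ ∘ p.extend) 0 = A := by
    have := key 0 (by norm_num)
    simpa [hc] using this
  have h1 : (Ψ ∘ p.extend) 1 = B := by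
    have := key 1 (by norm_num)
    simpa [hc] using this
  constructor
  · rw [h0, h1]
    rw [segment_eq_image_lineMap]
    ext z
    constructor
    · rintro ⟨t, ht, rfl⟩
      refine ⟨min (2*t) 1, ⟨le_min (by linarith [ht.1]) zero_le_one, min_le_right _ _⟩, ?_⟩
      exact (key t ht).symm
    · rintro ⟨s, hs, rfl⟩
      refine ⟨s/2, ⟨by linarith [hs.1], by linarith [hs.2]⟩, ?_⟩
      have := key (s/2) ⟨by linarith [hs.1], by linarith [hs.2]⟩
      rw [Function.comp_apply, this]
      congr 1
      rw [min_eq_left (by linarith [hs.2] : 2*(s/2) ≤ 1)]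
      ring
  · intro t₁ t₂ t₃ h₁ h₁₂ h₂₃ h₃
    have m1 : t₁ ∈ Set.Icc (0:ℝ) 1 := ⟨h₁, by linarith⟩
    have m2 : t₂ ∈ Set.Icc (0:ℝ) 1 := ⟨by linarith, by linarith⟩
    have m3 : t₃ ∈ Set.Icc (0:ℝ) 1 := ⟨by linarith, h₃⟩
    simp only [Function.comp_apply]
    rw [key t₁ m1, key t₂ m2, key t₃ m3]
    have hle12 : min (2*t₁) 1 ≤ min (2*t₂) 1 := min_le_min (by linarith) le_rfl
    have hle23 : min (2*t₂) 1 ≤ min (2*t₃) 1 := min_le_min (by linarith) le_rfl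
    have : c (min (2*t₂) 1) ∈ (AffineMap.lineMap A B : ℝ →ᵃ[ℝ] _) ''
        segment ℝ (min (2*t₁) 1) (min (2*t₃) 1) := by
      rw [segment_eq_Icc (hle12.trans hle23)]
      exact ⟨min (2*t₂) 1, ⟨hle12, hle23⟩, rfl⟩
    rwa [image_segment] at this
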